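/- Let A → B be an isometric morphism of nonarchimedean Banach rings such that the quotient map π : B → B/A admits an isometric A-linear section s : B/A → B. Then for all b₁, b₂ ∈ B one has |π(b₁ b₂)| ≤ max{ |b₂| |π(b₁)|, |b₁| |π(b₂)| }. -/

import Mathlib

/-- Let `A → B` be an isometric morphism of nonarchimedean Banach rings (realized by a closed
subring `A` of `B`) such that the quotient map `π : B → B/A` admits an isometric `A`-linear
section `s`.  Then `‖π (b₁ b₂)‖ ≤ max (‖b₂‖ ‖π b₁‖) (‖b₁‖ ‖π b₂‖)` for all `b₁ b₂ : B`. -/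
theorem stmt_5 {B : Type*} [NormedCommRing B] [CompleteSpace B]
    (hna : ∀ x y : B, ‖x + y‖ ≤ max ‖x‖ ‖y‖)
    (A : Subring B) (hAclosed : IsClosed (A : Set B))
    (s : B ⧸ A.toAddSubgroup → B)
    (hadd : ∀ x y, s (x + y) = s x + s y)
    (hlin : ∀ a ∈ A, ∀ b : B,
      s (QuotientAddGroup.mk (a * b)) = a * s (QuotientAddGroup.mk b))
    (hsec : ∀ q : B ⧸ A.toAddSubgroup,
      (QuotientAddGroup.mk (s q) : B ⧸ A.toAddSubgroup) = q)
    (hiso : ∀ q : B ⧸ A.toAddSubgroup, ‖s q‖ = ‖q‖) :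
    ∀ b₁ b₂ : B,
      ‖(QuotientAddGroup.mk (b₁ * b₂) : B ⧸ A.toAddSubgroup)‖ ≤
        max (‖b₂‖ * ‖(QuotientAddGroup.mk b₁ : B ⧸ A.toAddSubgroup)‖)
            (‖b₁‖ * ‖(QuotientAddGroup.mk b₂ : B ⧸ A.toAddSubgroup)‖) := by

  intro b₁ b₂
  -- quotient map bound
  have hmk_le : ∀ b : B, ‖(QuotientAddGroup.mk b : B ⧸ A.toAddSubgroup)‖ ≤ ‖b‖ :=
    fun b => QuotientAddGroup.norm_mk_le_norm (S := A.toAddSubgroup) (m := b)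
  set q₁ : B ⧸ A.toAddSubgroup := QuotientAddGroup.mk b₁ with hq₁
  set a₁ : B := b₁ - s q₁ with ha₁def
  have ha₁ : a₁ ∈ A := by
    have : (QuotientAddGroup.mk a₁ : B ⧸ A.toAddSubgroup) = 0 := by
      have : (QuotientAddGroup.mk a₁ : B ⧸ A.toAddSubgroup) = QuotientAddGroup.mk b₁ - QuotientAddGroup.mk (s q₁) := by
        simp [ha₁def, QuotientAddGroup.mk_sub]
      rw [this, hsec q₁, ← hq₁, sub_self]
    exact (QuotientAddGroup.eq_zero_iff a₁).mp this
  have hna' : ∀ x y : B, ‖x - y‖ ≤ max ‖x‖ ‖y‖ := by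
    intro x y
    have := hna x (-y)
    simpa [sub_eq_add_neg] using this
  have hsq₁ : ‖s q₁‖ = ‖q₁‖ := hiso q₁
  have ha₁norm : ‖a₁‖ ≤ ‖b₁‖ := by
    have h1 : ‖a₁‖ ≤ max ‖b₁‖ ‖s q₁‖ := hna' b₁ (s q₁)
    have h2 : ‖s q₁‖ ≤ ‖b₁‖ := by rw [hsq₁, hq₁]; exact hmk_le b₁
    exact h1.trans (max_le le_rfl h2)
  -- first piece
  have H1 : ‖(QuotientAddGroup.mk (a₁ * b₂) : B ⧸ A.toAddSubgroup)‖ ≤ ‖b₁‖ * ‖(QuotientAddGroup.mk b₂ : B ⧸ A.toAddSubgroup)‖ := by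
    have e1 : ‖(QuotientAddGroup.mk (a₁ * b₂) : B ⧸ A.toAddSubgroup)‖ = ‖a₁ * s (QuotientAddGroup.mk b₂)‖ := by
      rw [← hiso, hlin a₁ ha₁ b₂]
    rw [e1]
    calc ‖a₁ * s (QuotientAddGroup.mk b₂)‖ ≤ ‖a₁‖ * ‖s (QuotientAddGroup.mk b₂)‖ := norm_mul_le _ _
      _ ≤ ‖b₁‖ * ‖s (QuotientAddGroup.mk b₂)‖ := by
          exact mul_le_mul_of_nonneg_right ha₁norm (norm_nonneg _)
      _ = ‖b₁‖ * ‖(QuotientAddGroup.mk b₂ : B ⧸ A.toAddSubgroup)‖ := by rw [hiso]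
  -- second piece
  have H2 : ‖(QuotientAddGroup.mk (s q₁ * b₂) : B ⧸ A.toAddSubgroup)‖ ≤ ‖b₂‖ * ‖q₁‖ := by
    calc ‖(QuotientAddGroup.mk (s q₁ * b₂) : B ⧸ A.toAddSubgroup)‖ ≤ ‖s q₁ * b₂‖ := hmk_le _
      _ ≤ ‖s q₁‖ * ‖b₂‖ := norm_mul_le _ _
      _ = ‖b₂‖ * ‖q₁‖ := by rw [hsq₁, mul_comm]
  -- quotient norm is nonarchimedean via the isometric section
  have hQna : ∀ x y : B ⧸ A.toAddSubgroup, ‖x + y‖ ≤ max ‖x‖ ‖y‖ := by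
    intro x y
    calc ‖x + y‖ = ‖s (x + y)‖ := (hiso _).symm
      _ = ‖s x + s y‖ := by rw [hadd]
      _ ≤ max ‖s x‖ ‖s y‖ := hna _ _
      _ = max ‖x‖ ‖y‖ := by rw [hiso, hiso]
  have hsplit : b₁ * b₂ = a₁ * b₂ + s q₁ * b₂ := by rw [ha₁def]; ring
  calc ‖(QuotientAddGroup.mk (b₁ * b₂) : B ⧸ A.toAddSubgroup)‖
      = ‖(QuotientAddGroup.mk (a₁ * b₂) : B ⧸ A.toAddSubgroup) + QuotientAddGroup.mk (s q₁ * b₂)‖ := by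
        rw [hsplit, QuotientAddGroup.mk_add]
    _ ≤ max ‖(QuotientAddGroup.mk (a₁ * b₂) : B ⧸ A.toAddSubgroup)‖ ‖(QuotientAddGroup.mk (s q₁ * b₂) : B ⧸ A.toAddSubgroup)‖ :=
        hQna _ _
    _ ≤ max (‖b₂‖ * ‖(QuotientAddGroup.mk b₁ : B ⧸ A.toAddSubgroup)‖) (‖b₁‖ * ‖(QuotientAddGroup.mk b₂ : B ⧸ A.toAddSubgroup)‖) := by
        rw [max_comm]
        exact max_le_max H2 H1
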